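/- Let G be a finite subgroup of U(d) acting irreducibly on ℂ^d and let T ⊆ G be a transversal of Z(G) in G, i.e. a subset containing exactly one element from each coset of Z(G). Then a unitary N ∈ U(d) is a projective normaliser of G if and only if N is a projective normaliser of the set T; and a unitary N ∈ U(d²) is a projective normaliser of G⊗G if and only if N is a projective normaliser of the set T⊗T = {A⊗B : A, B ∈ T}. -/

import Mathlib

open Matrix Kronecker

/-- `N` is a projective normaliser of the set of matrices `S`:
for every `g ∈ S` there are `g' ∈ S` and a unit complex number `c` with `N g N† = c g'`. -/
def ProjNorm {n : Type*} [Fintype n] (N : Matrix n n ℂ) (S : Set (Matrix n n ℂ)) : Prop :=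
  ∀ g ∈ S, ∃ g' ∈ S, ∃ c : ℂ, ‖c‖ = 1 ∧ N * g * Nᴴ = c • g'

/-- The tensor (Kronecker) square of a set of matrices. -/
def tensorSet {d : ℕ} (S : Set (Matrix (Fin d) (Fin d) ℂ)) :
    Set (Matrix (Fin d × Fin d) (Fin d × Fin d) ℂ) :=
  {x | ∃ a ∈ S, ∃ b ∈ S, x = a ⊗ₖ b}

/-- Let G be a finite subgroup of U(d) acting irreducibly on ℂ^d and let
T ⊆ G be a transversal of Z(G) in G.  Then N ∈ U(d) is a projective normaliser of G iff
N is a projective normaliser of the set T; and N ∈ U(d²) is a projective normaliser of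
G⊗G iff N is a projective normaliser of T⊗T = {A⊗B : A,B ∈ T}. -/
lemma projNorm_congr {n : Type*} [Fintype n] (N : Matrix n n ℂ)
    (S S' : Set (Matrix n n ℂ)) (hsub : S' ⊆ S)
    (hdec : ∀ g ∈ S, ∃ t ∈ S', ∃ u : ℂ, ‖u‖ = 1 ∧ g = u • t) :
    ProjNorm N S ↔ ProjNorm N S' := by
  constructor
  · intro h t ht
    obtain ⟨g', hg', c, hc, heq⟩ := h t (hsub ht)
    obtain ⟨t', ht', u, hu, rfl⟩ := hdec g' hg'
    exact ⟨t', ht', c * u, by simp [_root_.map_mul, hc, hu], by rw [heq, smul_smul]⟩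
  · intro h g hg
    obtain ⟨t, ht, u, hu, rfl⟩ := hdec g hg
    obtain ⟨t', ht', c, hc, heq⟩ := h t ht
    refine ⟨t', hsub ht', u * c, by simp [_root_.map_mul, hc, hu], ?_⟩
    rw [Matrix.mul_smul, Matrix.smul_mul, heq, smul_smul]

lemma central_is_scalar {d : ℕ} (hd : 0 < d) (G : Set (Matrix (Fin d) (Fin d) ℂ))
    (hirr : ∀ W : Submodule ℂ (Fin d → ℂ),
      (∀ g ∈ G, ∀ x ∈ W, g.mulVec x ∈ W) → W = ⊥ ∨ W = ⊤)
    (z : Matrix (Fin d) (Fin d) ℂ) (hzU : z ∈ Matrix.unitaryGroup (Fin d) ℂ)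
    (hcomm : ∀ h ∈ G, z * h = h * z) :
    ∃ c : ℂ, ‖c‖ = 1 ∧ z = c • 1 := by
  have : Nontrivial (Fin d → ℂ) := by
    haveI : Nonempty (Fin d) := ⟨⟨0, hd⟩⟩
    infer_instance
  obtain ⟨μ, hμ⟩ := Module.End.exists_eigenvalue (Matrix.mulVecLin z)
  set W := Module.End.eigenspace (Matrix.mulVecLin z) μ with hW
  have hWne : W ≠ ⊥ := hμ
  have hinvW : ∀ g ∈ G, ∀ x ∈ W, g.mulVec x ∈ W := by
    intro g hg x hx
    have hx' : z.mulVec x = μ • x := by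
      simpa using (Module.End.mem_eigenspace_iff.mp hx)
    rw [hW, Module.End.mem_eigenspace_iff]
    simp only [Matrix.mulVecLin_apply]
    rw [Matrix.mulVec_mulVec, hcomm g hg, ← Matrix.mulVec_mulVec, hx',
      Matrix.mulVec_smul]
  have hWtop : W = ⊤ := (hirr W hinvW).resolve_left hWne
  have hzμ : z = μ • 1 := by
    have hall : ∀ x : Fin d → ℂ, z.mulVec x = μ • x := by
      intro x
      have hx : x ∈ W := hWtop ▸ Submodule.mem_top
      simpa using (Module.End.mem_eigenspace_iff.mp hx)
    ext i j
    have h2 := congrFun (hall (Pi.single j 1)) i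
    simp [Matrix.mulVec_single, Pi.single_apply, Matrix.one_apply] at h2 ⊢
    rw [h2]
  refine ⟨μ, ?_, hzμ⟩
  have h1 : star z * z = 1 := (Matrix.mem_unitaryGroup_iff'.mp hzU)
  rw [hzμ] at h1
  have h2 := congrFun (congrFun h1 ⟨0, hd⟩) ⟨0, hd⟩
  simp [Matrix.one_apply, Matrix.smul_apply, Matrix.mul_apply, star_smul] at h2
  have h3 : Complex.normSq μ = 1 := by
    have h4 := Complex.normSq_eq_conj_mul_self (z := μ)
    rw [h2] at h4
    exact_mod_cast h4
  have h5 : ‖μ‖ ^ 2 = 1 := by rw [Complex.sq_norm]; exact h3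
  nlinarith [norm_nonneg μ]

theorem stmt_4 {d : ℕ} (G : Set (Matrix (Fin d) (Fin d) ℂ))
    (hfin : G.Finite)
    (hunitary : ∀ g ∈ G, g ∈ Matrix.unitaryGroup (Fin d) ℂ)
    (hone : (1 : Matrix (Fin d) (Fin d) ℂ) ∈ G)
    (hmul : ∀ a ∈ G, ∀ b ∈ G, a * b ∈ G)
    (hinv : ∀ a ∈ G, aᴴ ∈ G)
    (hirr : ∀ W : Submodule ℂ (Fin d → ℂ),
      (∀ g ∈ G, ∀ x ∈ W, g.mulVec x ∈ W) → W = ⊥ ∨ W = ⊤)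
    (T : Set (Matrix (Fin d) (Fin d) ℂ)) (hTG : T ⊆ G)
    -- T contains exactly one element from each coset of Z(G) in G
    (htrans : ∀ g ∈ G, ∃! t, t ∈ T ∧ ∃ z ∈ {z ∈ G | ∀ h ∈ G, z * h = h * z}, g = z * t) :
    (∀ N ∈ Matrix.unitaryGroup (Fin d) ℂ, ProjNorm N G ↔ ProjNorm N T) ∧
    (∀ N ∈ Matrix.unitaryGroup (Fin d × Fin d) ℂ,
      ProjNorm N (tensorSet G) ↔ ProjNorm N (tensorSet T)) := by
  have hdec : ∀ g ∈ G, ∃ t ∈ T, ∃ u : ℂ, ‖u‖ = 1 ∧ g = u • t := by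
    intro g hg
    obtain ⟨t, ⟨ht, z, ⟨hzG, hzc⟩, rfl⟩, _⟩ := htrans g hg
    rcases Nat.eq_zero_or_pos d with hd | hd
    · refine ⟨t, ht, 1, by simp, ?_⟩
      subst hd
      ext i j; exact i.elim0
    · obtain ⟨c, hc, hzc'⟩ := central_is_scalar hd G hirr z (hunitary z hzG) hzc
      exact ⟨t, ht, c, hc, by rw [hzc', Matrix.smul_mul, Matrix.one_mul]⟩
  constructor
  · intro N _
    exact projNorm_congr N G T hTG hdec
  · intro N _
    refine projNorm_congr N (tensorSet G) (tensorSet T) ?_ ?_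
    · rintro x ⟨a, ha, b, hb, rfl⟩
      exact ⟨a, hTG ha, b, hTG hb, rfl⟩
    · rintro x ⟨a, ha, b, hb, rfl⟩
      obtain ⟨t, ht, u, hu, rfl⟩ := hdec a ha
      obtain ⟨t', ht', u', hu', rfl⟩ := hdec b hb
      refine ⟨t ⊗ₖ t', ⟨t, ht, t', ht', rfl⟩, u * u', by simp [_root_.map_mul, hu, hu'], ?_⟩
      rw [Matrix.smul_kronecker, Matrix.kronecker_smul, smul_smul]
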